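/- Let ι be a finite type and let U, V be ZMod 2-linear subspaces of the space of functions ι → ZMod 2 such that u·v = 0 for all u ∈ U and v ∈ V. Then the subspace {ψ : X_u ψ = ψ for all u ∈ U, and Z_v ψ = ψ for all v ∈ V} of the ι-qubit Hilbert space has complex dimension 2^{|ι| − dim U − dim V}, where dim denotes the ZMod 2-dimension. -/
import Mathlib

noncomputable section

/-- The `ZMod 2`-valued dot product `u·v = ∑ j, u j * v j`. -/
def dotp {ι : Type} [Fintype ι] (u v : ι → ZMod 2) : ZMod 2 := ∑ j, u j * v j

/-- The X-type Pauli operator `X_u`: the permutation matrix with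
`(X_u)_{s,t} = 1` iff `s = t + u`. -/
def Xop {ι : Type} [Fintype ι] (u : ι → ZMod 2) :
    Matrix (ι → ZMod 2) (ι → ZMod 2) ℂ :=
  Matrix.of fun s t => if s = t + u then 1 else 0

/-- The Z-type Pauli operator `Z_v`: the diagonal matrix with
`(Z_v)_{s,s} = (-1)^(v·s)`. -/
def Zop {ι : Type} [Fintype ι] (v : ι → ZMod 2) :
    Matrix (ι → ZMod 2) (ι → ZMod 2) ℂ :=
  Matrix.of fun s t => if s = t then (-1 : ℂ) ^ (dotp v s).val else 0

/-- The standard inner product on the `ι`-qubit Hilbert space `(ι → ZMod 2) → ℂ`. -/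
def qInner {ι : Type} [Fintype ι] [DecidableEq ι] (ψ φ : (ι → ZMod 2) → ℂ) : ℂ :=
  ∑ s, (starRingEnd ℂ) (ψ s) * φ s

/-- The subspace of vectors fixed by every operator in a given set of matrices. -/
def fixedSpace {ι : Type} [Fintype ι] [DecidableEq ι]
    (Ms : Set (Matrix (ι → ZMod 2) (ι → ZMod 2) ℂ)) :
    Submodule ℂ ((ι → ZMod 2) → ℂ) :=
  ⨅ M ∈ Ms, LinearMap.ker (Matrix.mulVecLin M - LinearMap.id)

namespace Statement9Aux

set_option linter.unusedSectionVars false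

variable {ι : Type} [Fintype ι] [DecidableEq ι]

lemma dotp_comm (u v : ι → ZMod 2) : dotp u v = dotp v u := by
  simp [dotp, mul_comm]

lemma dotp_add_right (v s t : ι → ZMod 2) : dotp v (s + t) = dotp v s + dotp v t := by
  simp [dotp, mul_add, Finset.sum_add_distrib]

lemma dotp_add_left (u w s : ι → ZMod 2) : dotp (u + w) s = dotp u s + dotp w s := by
  simp [dotp, add_mul, Finset.sum_add_distrib]

lemma dotp_smul_right (c : ZMod 2) (v s : ι → ZMod 2) : dotp v (c • s) = c * dotp v s := by
  simp [dotp, Finset.mul_sum, mul_left_comm]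

lemma dotp_smul_left (c : ZMod 2) (v s : ι → ZMod 2) : dotp (c • v) s = c * dotp v s := by
  simp [dotp, Finset.mul_sum, mul_assoc]

lemma add_self_z2 (s : ι → ZMod 2) : s + s = 0 := by
  funext j
  have : ∀ a : ZMod 2, a + a = 0 := by decide
  exact this (s j)

/-- `v ↦ (s ↦ dotp v s)` as a linear map into the dual. -/
def toDot : (ι → ZMod 2) →ₗ[ZMod 2] Module.Dual (ZMod 2) (ι → ZMod 2) where
  toFun v :=
    { toFun := fun s => dotp v s
      map_add' := dotp_add_right v
      map_smul' := fun c s => dotp_smul_right c v s }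
  map_add' u w := LinearMap.ext fun s => dotp_add_left u w s
  map_smul' c v := LinearMap.ext fun s => dotp_smul_left c v s

lemma toDot_injective : Function.Injective (toDot (ι := ι)) := by
  rw [injective_iff_map_eq_zero]
  intro v hv
  funext j
  have := LinearMap.congr_fun hv (Pi.single j 1)
  simpa [toDot, dotp, Pi.single_apply, mul_ite, Finset.sum_ite_eq'] using this

/-- The orthogonal complement of `V` with respect to `dotp`. -/
def orthV (V : Submodule (ZMod 2) (ι → ZMod 2)) : Submodule (ZMod 2) (ι → ZMod 2) where
  carrier := {s | ∀ v ∈ V, dotp v s = 0}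
  zero_mem' := by intro v hv; simp [dotp]
  add_mem' := by
    intro a b ha hb v hv
    rw [dotp_add_right, ha v hv, hb v hv, add_zero]
  smul_mem' := by
    intro c s hs v hv
    rw [dotp_smul_right, hs v hv, mul_zero]

lemma mem_orthV {V : Submodule (ZMod 2) (ι → ZMod 2)} {s : ι → ZMod 2} :
    s ∈ orthV V ↔ ∀ v ∈ V, dotp v s = 0 := Iff.rfl

lemma finrank_orthV (V : Submodule (ZMod 2) (ι → ZMod 2)) :
    Module.finrank (ZMod 2) (orthV V) + Module.finrank (ZMod 2) V = Fintype.card ι := by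
  have h1 : orthV V = (V.map toDot).dualCoannihilator := by
    ext s
    simp only [mem_orthV, Submodule.mem_dualCoannihilator]
    constructor
    · rintro h φ ⟨v, hv, rfl⟩; exact h v hv
    · intro h v hv; exact h (toDot v) ⟨v, hv, rfl⟩
  have h2 := Subspace.finrank_add_finrank_dualCoannihilator_eq (V.map toDot)
  have h3 : Module.finrank (ZMod 2) (V.map toDot) = Module.finrank (ZMod 2) V :=
    (Submodule.equivMapOfInjective toDot toDot_injective V).finrank_eq.symm
  rw [h1, add_comm, ← h3, h2, Module.finrank_pi]

lemma Xop_mulVec (u : ι → ZMod 2) (ψ : (ι → ZMod 2) → ℂ) (s : ι → ZMod 2) :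
    (Xop u).mulVec ψ s = ψ (s + u) := by
  have key : ∀ t : ι → ZMod 2, s = t + u ↔ t = s + u := by
    intro t
    constructor
    · rintro rfl; rw [add_assoc, add_self_z2, add_zero]
    · rintro rfl; rw [add_assoc, add_self_z2, add_zero]
  simp only [Matrix.mulVec, dotProduct, Xop, Matrix.of_apply, key, ite_mul, one_mul,
    zero_mul]
  rw [Finset.sum_ite_eq' Finset.univ (s + u) ψ]
  simp

lemma Zop_mulVec (v : ι → ZMod 2) (ψ : (ι → ZMod 2) → ℂ) (s : ι → ZMod 2) :
    (Zop v).mulVec ψ s = (-1 : ℂ) ^ (dotp v s).val * ψ s := by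
  simp only [Matrix.mulVec, dotProduct, Zop, Matrix.of_apply, ite_mul, zero_mul]
  rw [Finset.sum_ite_eq Finset.univ s fun t => (-1 : ℂ) ^ (dotp v s).val * ψ t]
  simp

lemma mem_fixedSpace_iff (U V : Submodule (ZMod 2) (ι → ZMod 2))
    (ψ : (ι → ZMod 2) → ℂ) :
    ψ ∈ fixedSpace ({M | ∃ u ∈ U, M = Xop u} ∪ {M | ∃ v ∈ V, M = Zop v}) ↔
      (∀ u ∈ U, ∀ s, ψ (s + u) = ψ s) ∧ (∀ s, s ∉ orthV V → ψ s = 0) := by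
  have hmem : ∀ M, ψ ∈ LinearMap.ker (Matrix.mulVecLin M - LinearMap.id) ↔ M.mulVec ψ = ψ := by
    intro M
    rw [LinearMap.mem_ker, LinearMap.sub_apply, LinearMap.id_apply, sub_eq_zero,
      Matrix.mulVecLin_apply]
  constructor
  · intro h
    have h' : ∀ M ∈ ({M | ∃ u ∈ U, M = Xop u} ∪ {M | ∃ v ∈ V, M = Zop v} :
        Set (Matrix (ι → ZMod 2) (ι → ZMod 2) ℂ)), M.mulVec ψ = ψ := by
      intro M hM
      rw [← hmem]
      exact (Submodule.mem_iInf _).mp ((Submodule.mem_iInf _).mp h M) hM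
    constructor
    · intro u hu s
      have := congrFun (h' (Xop u) (Or.inl ⟨u, hu, rfl⟩)) s
      rwa [Xop_mulVec] at this
    · intro s hs
      rw [mem_orthV] at hs
      push_neg at hs
      obtain ⟨v, hv, hvs⟩ := hs
      have h1 : dotp v s = 1 := by
        have : ∀ a : ZMod 2, a ≠ 0 → a = 1 := by decide
        exact this _ hvs
      have := congrFun (h' (Zop v) (Or.inr ⟨v, hv, rfl⟩)) s
      rw [Zop_mulVec, h1] at this
      simp only [ZMod.val_one, pow_one, neg_one_mul] at this
      linear_combination (-1/2 : ℂ) * this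
  · rintro ⟨hX, hZ⟩
    rw [fixedSpace]
    refine (Submodule.mem_iInf _).mpr fun M => (Submodule.mem_iInf _).mpr fun hM => ?_
    rw [hmem]
    rcases hM with ⟨u, hu, rfl⟩ | ⟨v, hv, rfl⟩
    · funext s
      rw [Xop_mulVec]
      exact hX u hu s
    · funext s
      rw [Zop_mulVec]
      by_cases h0 : dotp v s = 0
      · rw [h0]; simp
      · have hs : s ∉ orthV V := by
          rw [mem_orthV]; push_neg; exact ⟨v, hv, h0⟩
        rw [hZ s hs]; ring

end Statement9Aux

set_option synthInstance.maxHeartbeats 1000000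

open Statement9Aux in
/-- for orthogonal `ZMod 2`-subspaces `U, V` of `ι → ZMod 2`, the joint
`+1` eigenspace of all `X_u` (`u ∈ U`) and `Z_v` (`v ∈ V`) has complex dimension
`2^(|ι| - dim U - dim V)`. -/
theorem statement9 (ι : Type) [Fintype ι] [DecidableEq ι]
    (U V : Submodule (ZMod 2) (ι → ZMod 2))
    (hUV : ∀ u ∈ U, ∀ v ∈ V, dotp u v = 0) :
    Module.finrank ℂ
      ↥(fixedSpace ({M | ∃ u ∈ U, M = Xop u} ∪ {M | ∃ v ∈ V, M = Zop v})) =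
      2 ^ (Fintype.card ι - Module.finrank (ZMod 2) U - Module.finrank (ZMod 2) V) := by
  classical
  set W := orthV V with hW
  have hUW : U ≤ W := by
    intro u hu
    rw [mem_orthV]
    intro v hv
    rw [dotp_comm]
    exact hUV u hu v hv
  set U' : Submodule (ZMod 2) W := U.comap W.subtype with hU'
  set Q := W ⧸ U' with hQ
  -- the linear equivalence between fixedSpace and (Q → ℂ)
  set S : Set (Matrix (ι → ZMod 2) (ι → ZMod 2) ℂ) :=
    {M | ∃ u ∈ U, M = Xop u} ∪ {M | ∃ v ∈ V, M = Zop v} with hS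
  have key : ∀ (ψ : (ι → ZMod 2) → ℂ), ψ ∈ fixedSpace S ↔
      (∀ u ∈ U, ∀ s, ψ (s + u) = ψ s) ∧ (∀ s, s ∉ W → ψ s = 0) :=
    fun ψ => mem_fixedSpace_iff U V ψ
  -- forward map
  have wd : ∀ (ψ : fixedSpace S) (a b : W), U'.quotientRel a b → ψ.1 a.1 = ψ.1 b.1 := by
    intro ψ a b hab
    rw [Submodule.quotientRel_def] at hab
    have hu : (a.1 - b.1) ∈ U := hab
    have := ((key ψ.1).mp ψ.2).1 (a.1 - b.1) hu b.1
    rwa [add_sub_cancel] at this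
  let fwd : fixedSpace S → (Q → ℂ) := fun ψ q => Quotient.liftOn' q (fun w => ψ.1 w.1) (wd ψ)
  let bwdFun : (Q → ℂ) → ((ι → ZMod 2) → ℂ) := fun g s =>
    if h : s ∈ W then g (Submodule.Quotient.mk ⟨s, h⟩) else 0
  have hbwd : ∀ g, bwdFun g ∈ fixedSpace S := by
    intro g
    rw [key]
    constructor
    · intro u hu s
      have hmemiff : s + u ∈ W ↔ s ∈ W := by
        constructor
        · intro h
          have := W.add_mem h (hUW hu)
          rwa [add_assoc, add_self_z2, add_zero] at this
        · intro h; exact W.add_mem h (hUW hu)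
      by_cases h : s ∈ W
      · have h' : s + u ∈ W := hmemiff.mpr h
        simp only [bwdFun, dif_pos h, dif_pos h']
        congr 1
        rw [Submodule.Quotient.eq]
        show (⟨s + u, h'⟩ - ⟨s, h⟩ : W) ∈ U'
        have : (⟨s + u, h'⟩ - ⟨s, h⟩ : W) = ⟨u, hUW hu⟩ := by
          ext
          simp [add_sub_cancel_left]
        rw [this]
        exact hu
      · have h' : s + u ∉ W := fun hc => h (hmemiff.mp hc)
        simp only [bwdFun, dif_neg h, dif_neg h']
    · intro s hs
      simp only [bwdFun, dif_neg hs]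
  let e : (fixedSpace S) ≃ₗ[ℂ] (Q → ℂ) :=
    { toFun := fwd
      invFun := fun g => ⟨bwdFun g, hbwd g⟩
      left_inv := by
        intro ψ
        ext s
        show bwdFun (fwd ψ) s = ψ.1 s
        by_cases h : s ∈ W
        · simp only [bwdFun, dif_pos h]
          rfl
        · simp only [bwdFun, dif_neg h]
          exact (((key ψ.1).mp ψ.2).2 s h).symm
      right_inv := by
        intro g
        funext q
        obtain ⟨w, rfl⟩ := Submodule.Quotient.mk_surjective U' q
        show bwdFun g w.1 = g (Submodule.Quotient.mk w)
        exact dif_pos w.2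
      map_add' := by
        intro ψ φ
        funext q
        obtain ⟨w, rfl⟩ := Submodule.Quotient.mk_surjective U' q
        rfl
      map_smul' := by
        intro c ψ
        funext q
        obtain ⟨w, rfl⟩ := Submodule.Quotient.mk_surjective U' q
        rfl }
  haveI : Finite Q := Quotient.finite _
  haveI : Fintype Q := Fintype.ofFinite Q
  rw [e.finrank_eq, Module.finrank_pi ℂ]
  have hcard : Fintype.card Q = 2 ^ Module.finrank (ZMod 2) Q := by
    rw [Module.card_eq_pow_finrank (K := ZMod 2), ZMod.card]
  have hq : Module.finrank (ZMod 2) Q + Module.finrank (ZMod 2) U' =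
      Module.finrank (ZMod 2) W := Submodule.finrank_quotient_add_finrank U'
  have hU'rank : Module.finrank (ZMod 2) U' = Module.finrank (ZMod 2) U :=
    (Submodule.comapSubtypeEquivOfLe hUW).finrank_eq
  have hWrank := finrank_orthV V
  have h1 : Module.finrank (ZMod 2) Q + Module.finrank (ZMod 2) U =
      Module.finrank (ZMod 2) W := by rw [← hU'rank]; exact hq
  have h2 : Module.finrank (ZMod 2) W = Fintype.card ι - Module.finrank (ZMod 2) V :=
    Nat.eq_sub_of_add_eq hWrank
  have hexp : Module.finrank (ZMod 2) Q =
      Fintype.card ι - Module.finrank (ZMod 2) U - Module.finrank (ZMod 2) V := by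
    rw [Nat.eq_sub_of_add_eq h1, h2, Nat.sub_right_comm]
  rw [hcard, hexp]
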